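/- Let G = B(ℓ₁,…,ℓ_n) be the subdivided banana graph of genus g = n-1 ≥ 2. Then r((g-1)(Q₂) - (Q₁)) = -1; consequently Q₁ and Q₂ are not Weierstrass points of G. -/

import Mathlib

open Finset

structure Multigraph (V : Type) [Fintype V] [DecidableEq V] : Type where
  mult : V → V → ℕ
  symm : ∀ u v : V, mult u v = mult v u
  loopless : ∀ v : V, mult v v = 0
  connected : ∀ u v : V, Relation.ReflTransGen (fun a b => 0 < mult a b) u v

def divDeg {V : Type} [Fintype V] (D : V → ℤ) : ℤ := ∑ v, D v

def Effective {V : Type} (D : V → ℤ) : Prop := ∀ v, 0 ≤ D v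

namespace Multigraph

variable {V : Type} [Fintype V] [DecidableEq V]

def degree (G : Multigraph V) (v : V) : ℕ := ∑ w, G.mult v w

def edgeCount (G : Multigraph V) : ℕ := (∑ v, G.degree v) / 2

def genus (G : Multigraph V) : ℤ := (G.edgeCount : ℤ) - (Fintype.card V : ℤ) + 1

def laplacian (G : Multigraph V) (f : V → ℤ) : V → ℤ :=
  fun v => ∑ w, (G.mult v w : ℤ) * (f v - f w)

def Principal (G : Multigraph V) (D : V → ℤ) : Prop := ∃ f : V → ℤ, D = G.laplacian f

def Winnable (G : Multigraph V) (D : V → ℤ) : Prop :=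
  ∃ E : V → ℤ, Effective E ∧ G.Principal (D - E)

noncomputable def rank (G : Multigraph V) (D : V → ℤ) : ℤ :=
  sSup (insert (-1) {k : ℤ | 0 ≤ k ∧ ∀ E : V → ℤ, Effective E → divDeg E = k →
    G.Winnable (D - E)})

end Multigraph

/-- Vertex set of the subdivided banana graph B(ℓ₁,…,ℓ_n): the two vertices
Q₁ = Sum.inl false and Q₂ = Sum.inl true, together with the internal vertices
R_{i,1},…,R_{i,ℓᵢ-1} on the i-th path. -/
abbrev BV (n : ℕ) (ℓ : Fin n → ℕ) : Type := Bool ⊕ (Σ i : Fin n, Fin (ℓ i - 1))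

/-- One-directional adjacency for B(ℓ₁,…,ℓ_n): edges go from Q₁ to the first
internal vertex of each path, along each path in increasing order, from the last
internal vertex of each path to Q₂, and directly from Q₁ to Q₂ for each path of
length 1. -/
def badj (n : ℕ) (ℓ : Fin n → ℕ) : BV n ℓ → BV n ℓ → ℕ
  | Sum.inl false, Sum.inl true => (Finset.univ.filter fun i : Fin n => ℓ i = 1).card
  | Sum.inl false, Sum.inr ⟨_, j⟩ => if (j : ℕ) = 0 then 1 else 0
  | Sum.inr ⟨i, j⟩, Sum.inl true => if (j : ℕ) + 2 = ℓ i then 1 else 0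
  | Sum.inr ⟨i, j⟩, Sum.inr ⟨i', j'⟩ => if i = i' ∧ (j' : ℕ) = (j : ℕ) + 1 then 1 else 0
  | _, _ => 0

/-! Auxiliary lemmas -/

lemma unwinnable_of_order {V : Type} [Fintype V] [DecidableEq V] [Nonempty V]
    (G : Multigraph V) (ord : V → ℕ) (D : V → ℤ)
    (h : ∀ v, D v < ∑ w ∈ Finset.univ.filter (fun w => ord w < ord v), (G.mult v w : ℤ)) :
    ¬ G.Winnable D := by
  rintro ⟨E, hE, f, hf⟩
  obtain ⟨v₀, -, hv₀⟩ := Finset.exists_max_image Finset.univ f Finset.univ_nonempty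
  set S : Finset V := Finset.univ.filter (fun v => ∀ w, f w ≤ f v) with hS
  have hv₀S : v₀ ∈ S := by
    simp only [hS, Finset.mem_filter, Finset.mem_univ, true_and]
    exact fun w => hv₀ w (Finset.mem_univ w)
  obtain ⟨v, hvS, hmin⟩ := Finset.exists_min_image S ord ⟨v₀, hv₀S⟩
  have hfv : ∀ w, f w ≤ f v := (Finset.mem_filter.mp hvS).2
  have hlt : ∀ w, ord w < ord v → f w + 1 ≤ f v := by
    intro w hw
    rcases lt_or_eq_of_le (hfv w) with h' | h'
    · omega
    · exfalso
      have hwS : w ∈ S := by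
        simp only [hS, Finset.mem_filter, Finset.mem_univ, true_and]
        intro u; rw [h']; exact hfv u
      exact absurd (hmin w hwS) (not_le.mpr hw)
  have h1 : ∑ w ∈ Finset.univ.filter (fun w => ord w < ord v), (G.mult v w : ℤ)
      ≤ G.laplacian f v := by
    unfold Multigraph.laplacian
    calc ∑ w ∈ Finset.univ.filter (fun w => ord w < ord v), (G.mult v w : ℤ)
        ≤ ∑ w ∈ Finset.univ.filter (fun w => ord w < ord v),
            (G.mult v w : ℤ) * (f v - f w) := by
          apply Finset.sum_le_sum
          intro w hw
          have := hlt w (Finset.mem_filter.mp hw).2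
          exact le_mul_of_one_le_right (Int.natCast_nonneg _) (by omega)
      _ ≤ ∑ w, (G.mult v w : ℤ) * (f v - f w) := by
          apply Finset.sum_le_sum_of_subset_of_nonneg (Finset.filter_subset _ _)
          intro w _ _
          have := hfv w
          exact mul_nonneg (Int.natCast_nonneg _) (by omega)
  have h2 : G.laplacian f v = D v - E v := by
    have := congrFun hf v
    simp only [Pi.sub_apply] at this
    omega
  have := hE v
  have := h v
  omega

variable (n : ℕ) (ℓ : Fin n → ℕ)

lemma badj_from_Q2 (w : BV n ℓ) : badj n ℓ (Sum.inl true) w = 0 := by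
  rcases w with (_|_) | ⟨i, j⟩ <;> rfl

lemma badj_to_Q1 (w : BV n ℓ) : badj n ℓ w (Sum.inl false) = 0 := by
  rcases w with (_|_) | ⟨i, j⟩ <;> rfl

lemma inner2 (m : ℕ) : ∑ j : Fin (m - 1), (if (j : ℕ) + 2 = m then 1 else 0)
    = if 2 ≤ m then 1 else 0 := by
  match m with
  | 0 => simp
  | 1 => simp
  | m + 2 =>
    have h : ∀ k : ℕ, (k + 2 = m + 2) ↔ (k = m) := by omega
    rw [show m + 2 - 1 = m + 1 from rfl,
      Fin.sum_univ_eq_sum_range (fun k => if k + 2 = m + 2 then 1 else 0)]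
    simp only [h, Finset.sum_ite_eq' (Finset.range (m + 1)) m (fun _ => 1)]
    simp

lemma inner0 (m : ℕ) : ∑ j : Fin (m - 1), (if (j : ℕ) = 0 then 1 else 0)
    = if 2 ≤ m then 1 else 0 := by
  match m with
  | 0 => simp
  | 1 => simp
  | m + 2 =>
    rw [show m + 2 - 1 = m + 1 from rfl,
      Fin.sum_univ_eq_sum_range (fun k => if k = 0 then 1 else 0)]
    rw [Finset.sum_ite_eq' (Finset.range (m + 1)) 0 (fun _ => 1)]
    simp

lemma deg_Q2 (hℓ : ∀ i, 1 ≤ ℓ i) : ∑ w : BV n ℓ, badj n ℓ w (Sum.inl true) = n := by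
  rw [Fintype.sum_sum_type, Fintype.sum_bool]
  have h1 : badj n ℓ (Sum.inl true) (Sum.inl true) = 0 := rfl
  have h2 : badj n ℓ (Sum.inl false) (Sum.inl true)
      = (Finset.univ.filter fun i : Fin n => ℓ i = 1).card := rfl
  rw [h1, h2]
  have h3 : ∀ i : Fin n, ∑ j : Fin (ℓ i - 1), badj n ℓ (Sum.inr ⟨i, j⟩) (Sum.inl true)
      = if 2 ≤ ℓ i then 1 else 0 := by
    intro i
    rw [← inner2 (ℓ i)]
    rfl
  rw [← Finset.univ_sigma_univ, Finset.sum_sigma]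
  simp only [h3]
  rw [Finset.card_filter]
  rw [zero_add, ← Finset.sum_add_distrib]
  have : ∀ i : Fin n, ((if ℓ i = 1 then 1 else 0) + if 2 ≤ ℓ i then 1 else 0) = 1 := by
    intro i
    have := hℓ i
    split_ifs <;> omega
  rw [Finset.sum_congr rfl (fun i _ => this i)]
  simp

lemma deg_Q1 (hℓ : ∀ i, 1 ≤ ℓ i) : ∑ w : BV n ℓ, badj n ℓ (Sum.inl false) w = n := by
  rw [Fintype.sum_sum_type, Fintype.sum_bool]
  have h1 : badj n ℓ (Sum.inl false) (Sum.inl true)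
      = (Finset.univ.filter fun i : Fin n => ℓ i = 1).card := rfl
  have h2 : badj n ℓ (Sum.inl false) (Sum.inl false) = 0 := rfl
  rw [h1, h2]
  have h3 : ∀ i : Fin n, ∑ j : Fin (ℓ i - 1), badj n ℓ (Sum.inl false) (Sum.inr ⟨i, j⟩)
      = if 2 ≤ ℓ i then 1 else 0 := by
    intro i
    rw [← inner0 (ℓ i)]
    rfl
  rw [← Finset.univ_sigma_univ, Finset.sum_sigma]
  simp only [h3]
  rw [Finset.card_filter]
  rw [add_zero, ← Finset.sum_add_distrib]
  have : ∀ i : Fin n, ((if ℓ i = 1 then 1 else 0) + if 2 ≤ ℓ i then 1 else 0) = 1 := by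
    intro i
    have := hℓ i
    split_ifs <;> omega
  rw [Finset.sum_congr rfl (fun i _ => this i)]
  simp

def ordA : BV n ℓ → ℕ
  | Sum.inl false => 0
  | Sum.inl true => Finset.univ.sup ℓ + 1
  | Sum.inr ⟨_, j⟩ => (j : ℕ) + 1

def ordB : BV n ℓ → ℕ
  | Sum.inl true => 0
  | Sum.inl false => Finset.univ.sup ℓ + 1
  | Sum.inr ⟨i, j⟩ => ℓ i - 1 - (j : ℕ)

lemma keyA (hℓ : ∀ i, 1 ≤ ℓ i) (G : Multigraph (BV n ℓ))
    (hmult : ∀ u v : BV n ℓ, G.mult u v = badj n ℓ u v + badj n ℓ v u)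
    (D : BV n ℓ → ℤ) (hQ2 : D (Sum.inl true) ≤ (n : ℤ) - 1)
    (hQ1 : D (Sum.inl false) ≤ -1) (hR : ∀ p, D (Sum.inr p) ≤ 0) :
    ¬ G.Winnable D := by
  apply unwinnable_of_order G (ordA n ℓ) D
  rintro ((_|_) | ⟨i, jv, hj⟩)
  · -- Q₁
    have hfil : Finset.univ.filter
        (fun w => ordA n ℓ w < ordA n ℓ (Sum.inl false)) = ∅ := by
      apply Finset.filter_false_of_mem
      intro w _
      show ¬ ordA n ℓ w < 0
      omega
    rw [hfil, Finset.sum_empty]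
    omega
  · -- Q₂
    have hfil : Finset.univ.filter
        (fun w => ordA n ℓ w < ordA n ℓ (Sum.inl true))
        = Finset.univ.erase (Sum.inl true) := by
      ext w
      simp only [Finset.mem_filter, Finset.mem_univ, true_and, Finset.mem_erase, and_true]
      rcases w with (_|_) | ⟨i, j⟩
      · exact iff_of_true (by show 0 < Finset.univ.sup ℓ + 1; omega) (by simp)
      · exact iff_of_false (by show ¬ Finset.univ.sup ℓ + 1 < Finset.univ.sup ℓ + 1; omega)
          (by simp)
      · refine iff_of_true ?_ (by simp)
        show (j : ℕ) + 1 < Finset.univ.sup ℓ + 1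
        have h1 : ℓ i ≤ Finset.univ.sup ℓ := Finset.le_sup (Finset.mem_univ i)
        have h2 : (j : ℕ) < ℓ i - 1 := j.isLt
        omega
    rw [hfil, Finset.sum_erase _ (by rw [hmult]; simp [badj_from_Q2])]
    have hsum : ∑ w, (G.mult (Sum.inl true) w : ℤ) = n := by
      have hnat : ∑ w, G.mult (Sum.inl true) w = n := by
        calc ∑ w, G.mult (Sum.inl true) w
            = ∑ w, badj n ℓ w (Sum.inl true) := by
              apply Finset.sum_congr rfl
              intro w _
              rw [hmult, badj_from_Q2, zero_add]
          _ = n := deg_Q2 n ℓ hℓ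
      exact_mod_cast congrArg (Nat.cast : ℕ → ℤ) hnat
    rw [hsum]
    omega
  · -- internal vertex
    have hD := hR ⟨i, ⟨jv, hj⟩⟩
    have hsum : 1 ≤ ∑ w ∈ Finset.univ.filter
        (fun w => ordA n ℓ w < ordA n ℓ (Sum.inr ⟨i, ⟨jv, hj⟩⟩)), (G.mult (Sum.inr ⟨i, ⟨jv, hj⟩⟩) w : ℤ) := by
      rcases Nat.eq_zero_or_pos jv with hjv | hjv
      · subst hjv
        have hmem : (Sum.inl false : BV n ℓ) ∈ Finset.univ.filter
            (fun w => ordA n ℓ w < ordA n ℓ (Sum.inr ⟨i, ⟨0, hj⟩⟩)) := by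
          simp only [Finset.mem_filter, Finset.mem_univ, true_and]
          show 0 < 0 + 1
          omega
        have hval : 1 ≤ (G.mult (Sum.inr ⟨i, ⟨0, hj⟩⟩) (Sum.inl false) : ℤ) := by
          rw [hmult]
          have : badj n ℓ (Sum.inl false) (Sum.inr ⟨i, ⟨0, hj⟩⟩) = 1 := by
            simp [badj]
          rw [badj_to_Q1, this]
          norm_num
        calc (1:ℤ) ≤ (G.mult (Sum.inr ⟨i, ⟨0, hj⟩⟩) (Sum.inl false) : ℤ) := hval
          _ ≤ _ := Finset.single_le_sum (fun w _ => Int.natCast_nonneg _) hmem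
      · set w₀ : BV n ℓ := Sum.inr ⟨i, ⟨jv - 1, by omega⟩⟩ with hw₀
        have hmem : w₀ ∈ Finset.univ.filter
            (fun w => ordA n ℓ w < ordA n ℓ (Sum.inr ⟨i, ⟨jv, hj⟩⟩)) := by
          simp only [Finset.mem_filter, Finset.mem_univ, true_and, hw₀]
          show (jv - 1) + 1 < jv + 1
          omega
        have hval : 1 ≤ (G.mult (Sum.inr ⟨i, ⟨jv, hj⟩⟩) w₀ : ℤ) := by
          rw [hmult, hw₀]
          have h1 : badj n ℓ (Sum.inr ⟨i, ⟨jv - 1, by omega⟩⟩) (Sum.inr ⟨i, ⟨jv, hj⟩⟩) = 1 := by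
            show (if i = i ∧ jv = (jv - 1) + 1 then 1 else 0) = 1
            rw [if_pos ⟨rfl, by omega⟩]
          rw [h1]
          have : (0:ℤ) ≤ badj n ℓ (Sum.inr ⟨i, ⟨jv, hj⟩⟩) (Sum.inr ⟨i, ⟨jv - 1, by omega⟩⟩) :=
            Int.natCast_nonneg _
          push_cast
          omega
        calc (1:ℤ) ≤ (G.mult (Sum.inr ⟨i, ⟨jv, hj⟩⟩) w₀ : ℤ) := hval
          _ ≤ _ := Finset.single_le_sum (fun w _ => Int.natCast_nonneg _) hmem
    omega

lemma keyB (hℓ : ∀ i, 1 ≤ ℓ i) (G : Multigraph (BV n ℓ))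
    (hmult : ∀ u v : BV n ℓ, G.mult u v = badj n ℓ u v + badj n ℓ v u)
    (D : BV n ℓ → ℤ) (hQ1 : D (Sum.inl false) ≤ (n : ℤ) - 1)
    (hQ2 : D (Sum.inl true) ≤ -1) (hR : ∀ p, D (Sum.inr p) ≤ 0) :
    ¬ G.Winnable D := by
  apply unwinnable_of_order G (ordB n ℓ) D
  rintro ((_|_) | ⟨i, jv, hj⟩)
  · -- Q₁ : last
    have hfil : Finset.univ.filter
        (fun w => ordB n ℓ w < ordB n ℓ (Sum.inl false))
        = Finset.univ.erase (Sum.inl false) := by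
      ext w
      simp only [Finset.mem_filter, Finset.mem_univ, true_and, Finset.mem_erase, and_true]
      rcases w with (_|_) | ⟨i, j⟩
      · exact iff_of_false (by show ¬ Finset.univ.sup ℓ + 1 < Finset.univ.sup ℓ + 1; omega)
          (by simp)
      · exact iff_of_true (by show 0 < Finset.univ.sup ℓ + 1; omega) (by simp)
      · refine iff_of_true ?_ (by simp)
        show ℓ i - 1 - (j : ℕ) < Finset.univ.sup ℓ + 1
        have h1 : ℓ i ≤ Finset.univ.sup ℓ := Finset.le_sup (Finset.mem_univ i)
        omega
    rw [hfil, Finset.sum_erase _ (by rw [hmult]; simp [badj_to_Q1])]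
    have hsum : ∑ w, (G.mult (Sum.inl false) w : ℤ) = n := by
      have hnat : ∑ w, G.mult (Sum.inl false) w = n := by
        calc ∑ w, G.mult (Sum.inl false) w
            = ∑ w, badj n ℓ (Sum.inl false) w := by
              apply Finset.sum_congr rfl
              intro w _
              rw [hmult, badj_to_Q1, add_zero]
          _ = n := deg_Q1 n ℓ hℓ
      exact_mod_cast congrArg (Nat.cast : ℕ → ℤ) hnat
    rw [hsum]
    omega
  · -- Q₂ : first
    have hfil : Finset.univ.filter
        (fun w => ordB n ℓ w < ordB n ℓ (Sum.inl true)) = ∅ := by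
      apply Finset.filter_false_of_mem
      intro w _
      show ¬ ordB n ℓ w < 0
      omega
    rw [hfil, Finset.sum_empty]
    omega
  · -- internal vertex
    have hD := hR ⟨i, ⟨jv, hj⟩⟩
    have hℓi := hℓ i
    have hsum : 1 ≤ ∑ w ∈ Finset.univ.filter
        (fun w => ordB n ℓ w < ordB n ℓ (Sum.inr ⟨i, ⟨jv, hj⟩⟩)),
        (G.mult (Sum.inr ⟨i, ⟨jv, hj⟩⟩) w : ℤ) := by
      rcases Nat.lt_or_ge (jv + 2) (ℓ i) with hcase | hcase
      · -- successor internal vertex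
        set w₀ : BV n ℓ := Sum.inr ⟨i, ⟨jv + 1, by omega⟩⟩ with hw₀
        have hmem : w₀ ∈ Finset.univ.filter
            (fun w => ordB n ℓ w < ordB n ℓ (Sum.inr ⟨i, ⟨jv, hj⟩⟩)) := by
          simp only [Finset.mem_filter, Finset.mem_univ, true_and, hw₀]
          show ℓ i - 1 - (jv + 1) < ℓ i - 1 - jv
          omega
        have hval : 1 ≤ (G.mult (Sum.inr ⟨i, ⟨jv, hj⟩⟩) w₀ : ℤ) := by
          rw [hmult, hw₀]
          have h1 : badj n ℓ (Sum.inr ⟨i, ⟨jv, hj⟩⟩) (Sum.inr ⟨i, ⟨jv + 1, by omega⟩⟩) = 1 := by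
            show (if i = i ∧ jv + 1 = jv + 1 then 1 else 0) = 1
            rw [if_pos ⟨rfl, rfl⟩]
          rw [h1]
          push_cast
          omega
        calc (1:ℤ) ≤ (G.mult (Sum.inr ⟨i, ⟨jv, hj⟩⟩) w₀ : ℤ) := hval
          _ ≤ _ := Finset.single_le_sum (fun w _ => Int.natCast_nonneg _) hmem
      · -- last internal vertex: neighbor Q₂
        have hl : jv + 2 = ℓ i := by omega
        have hmem : (Sum.inl true : BV n ℓ) ∈ Finset.univ.filter
            (fun w => ordB n ℓ w < ordB n ℓ (Sum.inr ⟨i, ⟨jv, hj⟩⟩)) := by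
          simp only [Finset.mem_filter, Finset.mem_univ, true_and]
          show 0 < ℓ i - 1 - jv
          omega
        have hval : 1 ≤ (G.mult (Sum.inr ⟨i, ⟨jv, hj⟩⟩) (Sum.inl true) : ℤ) := by
          rw [hmult]
          have h1 : badj n ℓ (Sum.inr ⟨i, ⟨jv, hj⟩⟩) (Sum.inl true) = 1 := by
            show (if jv + 2 = ℓ i then 1 else 0) = 1
            rw [if_pos hl]
          rw [h1, badj_from_Q2]
          norm_num
        calc (1:ℤ) ≤ (G.mult (Sum.inr ⟨i, ⟨jv, hj⟩⟩) (Sum.inl true) : ℤ) := hval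
          _ ≤ _ := Finset.single_le_sum (fun w _ => Int.natCast_nonneg _) hmem
    omega

/-- On the subdivided banana graph G = B(ℓ₁,…,ℓ_n) (n ≥ 3, each ℓᵢ ≥ 1), of
genus g = n - 1 ≥ 2, the divisor (g-1)(Q₂) - (Q₁) has rank -1; consequently
neither Q₁ nor Q₂ is a Weierstrass point (r(g·(Qᵢ)) < 1). -/
theorem subdivided_banana_endpoints_not_weierstrass (n : ℕ) (ℓ : Fin n → ℕ)
    (hn : 3 ≤ n) (hℓ : ∀ i, 1 ≤ ℓ i)
    (G : Multigraph (BV n ℓ))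
    (hmult : ∀ u v : BV n ℓ, G.mult u v = badj n ℓ u v + badj n ℓ v u) :
    G.rank (fun w => if w = Sum.inl true then (n : ℤ) - 2
      else if w = Sum.inl false then -1 else 0) = -1 ∧
    G.rank (fun w => if w = (Sum.inl false : BV n ℓ) then (n : ℤ) - 1 else 0) < 1 ∧
    G.rank (fun w => if w = (Sum.inl true : BV n ℓ) then (n : ℤ) - 1 else 0) < 1 := by
  have hcast : (3 : ℤ) ≤ (n : ℤ) := by exact_mod_cast hn
  refine ⟨?_, ?_, ?_⟩
  · -- rank ((n-2)Q₂ - Q₁) = -1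
    show sSup _ = -1
    have hS : {k : ℤ | 0 ≤ k ∧ ∀ E : BV n ℓ → ℤ, Effective E → divDeg E = k →
        G.Winnable ((fun w => if w = Sum.inl true then (n : ℤ) - 2
          else if w = Sum.inl false then -1 else 0) - E)} = ∅ := by
      ext k
      simp only [Set.mem_setOf_eq, Set.mem_empty_iff_false, iff_false, not_and]
      intro hk hw
      set E : BV n ℓ → ℤ := fun w => if w = Sum.inl false then k else 0 with hEdef
      have hEeff : Effective E := by
        intro v; simp only [hEdef]; split <;> omega
      have hdeg : divDeg E = k := by
        simp only [divDeg, hEdef]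
        rw [Finset.sum_ite_eq' Finset.univ (Sum.inl false : BV n ℓ) (fun _ => k)]
        simp
      refine keyA n ℓ hℓ G hmult _ ?_ ?_ ?_ (hw E hEeff hdeg)
      · simp only [Pi.sub_apply, hEdef]
        norm_num
      · simp only [Pi.sub_apply, hEdef]
        norm_num
        omega
      · intro p
        simp [Pi.sub_apply, hEdef]
    rw [hS]
    rw [insert_empty_eq]
    exact csSup_singleton _
  · -- rank ((n-1)Q₁) < 1
    have h0 : G.rank (fun w => if w = (Sum.inl false : BV n ℓ) then (n : ℤ) - 1 else 0) ≤ 0 := by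
      apply csSup_le ⟨-1, Set.mem_insert _ _⟩
      intro x hx
      rcases Set.mem_insert_iff.mp hx with rfl | ⟨hx0, hw⟩
      · norm_num
      · by_contra hx1
        push_neg at hx1
        set E : BV n ℓ → ℤ := fun w => if w = Sum.inl true then x else 0 with hEdef
        have hEeff : Effective E := by
          intro v; simp only [hEdef]; split <;> omega
        have hdeg : divDeg E = x := by
          simp only [divDeg, hEdef]
          rw [Finset.sum_ite_eq' Finset.univ (Sum.inl true : BV n ℓ) (fun _ => x)]
          simp
        refine keyB n ℓ hℓ G hmult _ ?_ ?_ ?_ (hw E hEeff hdeg)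
        · simp only [Pi.sub_apply, hEdef]
          norm_num
        · simp only [Pi.sub_apply, hEdef]
          norm_num
          omega
        · intro p
          simp [Pi.sub_apply, hEdef]
    omega
  · -- rank ((n-1)Q₂) < 1
    have h0 : G.rank (fun w => if w = (Sum.inl true : BV n ℓ) then (n : ℤ) - 1 else 0) ≤ 0 := by
      apply csSup_le ⟨-1, Set.mem_insert _ _⟩
      intro x hx
      rcases Set.mem_insert_iff.mp hx with rfl | ⟨hx0, hw⟩
      · norm_num
      · by_contra hx1
        push_neg at hx1
        set E : BV n ℓ → ℤ := fun w => if w = Sum.inl false then x else 0 with hEdef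
        have hEeff : Effective E := by
          intro v; simp only [hEdef]; split <;> omega
        have hdeg : divDeg E = x := by
          simp only [divDeg, hEdef]
          rw [Finset.sum_ite_eq' Finset.univ (Sum.inl false : BV n ℓ) (fun _ => x)]
          simp
        refine keyA n ℓ hℓ G hmult _ ?_ ?_ ?_ (hw E hEeff hdeg)
        · simp only [Pi.sub_apply, hEdef]
          norm_num
        · simp only [Pi.sub_apply, hEdef]
          norm_num
          omega
        · intro p
          simp [Pi.sub_apply, hEdef]
    omega
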